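/- (Proposition on pair cross-attention: total invariance of α_s^pair and X-equivariance / Y-invariance of α_v^pair.) Let N, C, D ≥ 1. Let p : Fin N → Fin N → ℝ be any array of scalars (the invariant scalar-feature score term), let F_X, F_Y : Fin N → Fin C → ℝ³ be per-point vector features with F_X i c ≠ 0 and F_Y j c ≠ 0 for all i, j, c, let g : Fin N → (Fin D → ℝ) be invariant value features, let ψ : (Fin C → ℝ) → (Fin C → ℝ) be any function, let w_q, w_k ∈ ℝ^C and let W be a real C×C matrix. For each i, j define the aligned features A i j c = (ψ(fun c' ↦ ‖F_X i c' ⊗ F_Y j c'‖_F) c • ((F_X i c ⊗ F_Y j c) / ‖F_X i c ⊗ F_Y j c‖_F)) *ᵥ (F_Y j c), the scores e i j = p i j + Σ_{c,c'} (w_q c) * ⟨F_X i c, A i j c'⟩ * (w_k c'), the softmax weights s i j = exp(e i j) / Σ_{j'} exp(e i j'), and the outputs α_s i = Σ_j (s i j) • (g j) and α_v i c = Σ_j (s i j) • ((A i j) as a 3×C matrix * W evaluated at channel c). Then for all R_x, R_y ∈ SO(3), replacing F_X by fun i c ↦ R_x *ᵥ F_X i c and F_Y by fun j c ↦ R_y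 *ᵥ F_Y j c leaves e, s and α_s unchanged, and transforms α_v i c into R_x *ᵥ (α_v i c) for all i, c. -/

import Mathlib

/-- The Frobenius norm of a 3×3 real matrix: `‖F‖_F = √(Σᵢⱼ Fᵢⱼ²)`. -/
noncomputable def frobNorm (F : Matrix (Fin 3) (Fin 3) ℝ) : ℝ :=
  Real.sqrt (∑ i, ∑ j, (F i j) ^ 2)

/-- Rotations preserve dot products. -/
lemma rot_dot (R : Matrix (Fin 3) (Fin 3) ℝ) (hR : R.transpose * R = 1)
    (u v : Fin 3 → ℝ) : dotProduct (R.mulVec u) (R.mulVec v)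
      = dotProduct u v := by
  rw [Matrix.dotProduct_mulVec, ← Matrix.mulVec_transpose, Matrix.mulVec_mulVec, hR,
    Matrix.one_mulVec]

/-- `(u ⊗ v) w = ⟨v, w⟩ • u`. -/
lemma vecMulVec_mulVec' (u v w : Fin 3 → ℝ) :
    (Matrix.vecMulVec u v).mulVec w = (dotProduct v w) • u := by
  ext i
  simp [Matrix.mulVec, Matrix.vecMulVec_apply, dotProduct, Finset.mul_sum,
    Finset.sum_mul, mul_comm, mul_left_comm]

lemma frob_vecMulVec (u v : Fin 3 → ℝ) :
    frobNorm (Matrix.vecMulVec u v)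
      = Real.sqrt (dotProduct u u * dotProduct v v) := by
  unfold frobNorm
  congr 1
  simp only [Matrix.vecMulVec_apply, dotProduct, mul_pow, ← Finset.sum_mul,
    Finset.sum_mul, Finset.mul_sum, ← sq]
  rw [Finset.sum_comm]

lemma frob_rot (Rx Ry : Matrix (Fin 3) (Fin 3) ℝ)
    (hRx : Rx.transpose * Rx = 1) (hRy : Ry.transpose * Ry = 1) (u v : Fin 3 → ℝ) :
    frobNorm (Matrix.vecMulVec (Rx.mulVec u) (Ry.mulVec v))
      = frobNorm (Matrix.vecMulVec u v) := by
  rw [frob_vecMulVec, frob_vecMulVec, rot_dot Rx hRx, rot_dot Ry hRy]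

/-- Pair cross-attention: the scores `e`, the softmax weights `s` and the scalar output
`α_s^pair` are invariant to independent rotations `R_x, R_y ∈ SO(3)` of the two point
clouds' vector features, while the vector output `α_v^pair` is equivariant to the rotation
of the first point cloud `X` and invariant to the rotation of the second point cloud `Y`. -/
theorem pair_cross_attention_equivariance
    (N C D : ℕ) (hN : 1 ≤ N) (hC : 1 ≤ C) (hD : 1 ≤ D)
    (p : Fin N → Fin N → ℝ)
    (FX FY : Fin N → Fin C → Fin 3 → ℝ)
    (hFX : ∀ i c, FX i c ≠ 0) (hFY : ∀ j c, FY j c ≠ 0)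
    (g : Fin N → Fin D → ℝ)
    (ψ : (Fin C → ℝ) → (Fin C → ℝ))
    (wq wk : Fin C → ℝ)
    (W : Matrix (Fin C) (Fin C) ℝ)
    (Rx Ry : Matrix (Fin 3) (Fin 3) ℝ)
    (hRx : Rx.transpose * Rx = 1) (hdetx : Rx.det = 1)
    (hRy : Ry.transpose * Ry = 1) (hdety : Ry.det = 1) :
    -- aligned features `A i j c = b(F_X i, F_Y j) c *ᵥ F_Y j c`
    let A : (Fin N → Fin C → Fin 3 → ℝ) → (Fin N → Fin C → Fin 3 → ℝ) →
        Fin N → Fin N → Fin C → Fin 3 → ℝ :=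
      fun GX GY i j c =>
        (ψ (fun c' => frobNorm (Matrix.vecMulVec (GX i c') (GY j c'))) c
            • ((frobNorm (Matrix.vecMulVec (GX i c) (GY j c)))⁻¹
              • Matrix.vecMulVec (GX i c) (GY j c))).mulVec (GY j c)
    -- attention scores
    let e : (Fin N → Fin C → Fin 3 → ℝ) → (Fin N → Fin C → Fin 3 → ℝ) →
        Fin N → Fin N → ℝ :=
      fun GX GY i j =>
        p i j + ∑ c, ∑ c', wq c * (dotProduct (GX i c) (A GX GY i j c')) * wk c'
    -- softmax weights
    let s : (Fin N → Fin C → Fin 3 → ℝ) → (Fin N → Fin C → Fin 3 → ℝ) →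
        Fin N → Fin N → ℝ :=
      fun GX GY i j => Real.exp (e GX GY i j) / ∑ j', Real.exp (e GX GY i j')
    -- scalar (invariant) output
    let αs : (Fin N → Fin C → Fin 3 → ℝ) → (Fin N → Fin C → Fin 3 → ℝ) →
        Fin N → Fin D → ℝ :=
      fun GX GY i => ∑ j, s GX GY i j • g j
    -- vector output: the aligned features, viewed as a 3×C matrix, with channels mixed by `W`
    let αv : (Fin N → Fin C → Fin 3 → ℝ) → (Fin N → Fin C → Fin 3 → ℝ) →
        Fin N → Fin C → Fin 3 → ℝ :=
      fun GX GY i c => ∑ j, s GX GY i j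
        • (fun r => (Matrix.of (fun r' c' => A GX GY i j c' r') * W) r c)
    -- rotated features
    let FX' : Fin N → Fin C → Fin 3 → ℝ := fun i c => Rx.mulVec (FX i c)
    let FY' : Fin N → Fin C → Fin 3 → ℝ := fun j c => Ry.mulVec (FY j c)
    (∀ i j, e FX' FY' i j = e FX FY i j) ∧
    (∀ i j, s FX' FY' i j = s FX FY i j) ∧
    (∀ i, αs FX' FY' i = αs FX FY i) ∧
    (∀ i c, αv FX' FY' i c = Rx.mulVec (αv FX FY i c)) := by
  intro A e s αs αv FX' FY'
  have hA : ∀ i j c, A FX' FY' i j c = Rx.mulVec (A FX FY i j c) := by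
    intro i j c
    show ((_ : ℝ) • ((_ : ℝ)⁻¹ • Matrix.vecMulVec (FX' i c) (FY' j c))).mulVec (FY' j c)
      = Rx.mulVec (((_ : ℝ) • ((_ : ℝ)⁻¹ • Matrix.vecMulVec (FX i c) (FY j c))).mulVec (FY j c))
    have hψ : (fun c' => frobNorm (Matrix.vecMulVec (FX' i c') (FY' j c')))
        = fun c' => frobNorm (Matrix.vecMulVec (FX i c') (FY j c')) := by
      funext c'
      exact frob_rot Rx Ry hRx hRy _ _
    simp only [FX', FY', hψ, frob_rot Rx Ry hRx hRy, smul_smul,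
      Matrix.smul_mulVec, vecMulVec_mulVec', rot_dot Ry hRy,
      Matrix.mulVec_smul]
  have he : ∀ i j, e FX' FY' i j = e FX FY i j := by
    intro i j
    show p i j + _ = p i j + _
    congr 1
    refine Finset.sum_congr rfl fun c _ => Finset.sum_congr rfl fun c' _ => ?_
    rw [hA]
    show wq c * dotProduct (Rx.mulVec (FX i c)) (Rx.mulVec _) * wk c' = _
    rw [rot_dot Rx hRx]
  have hs : ∀ i j, s FX' FY' i j = s FX FY i j := by
    intro i j
    show Real.exp (e FX' FY' i j) / _ = _
    simp only [he]
    rfl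
  refine ⟨he, hs, fun i => ?_, fun i c => ?_⟩
  · show (∑ j, s FX' FY' i j • g j) = _
    simp only [hs]
    rfl
  · show (∑ j, s FX' FY' i j • (fun r => (Matrix.of (fun r' c' => A FX' FY' i j c' r') * W) r c))
      = Rx.mulVec (∑ j, s FX FY i j
        • (fun r => (Matrix.of (fun r' c' => A FX FY i j c' r') * W) r c))
    funext r
    simp only [hs, hA, Matrix.mulVec, dotProduct, Finset.sum_apply, Pi.smul_apply,
      Matrix.mul_apply, Matrix.of_apply, smul_eq_mul, Finset.mul_sum, Finset.sum_mul,
      mul_assoc]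
    conv_rhs => rw [Finset.sum_comm]
    refine Finset.sum_congr rfl fun j _ => ?_
    rw [Finset.sum_comm]
    refine Finset.sum_congr rfl fun c' _ => Finset.sum_congr rfl fun k _ => ?_
    ring
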